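/- Every word of length 2^n occurring as a factor (subword) of ξ can be obtained from one of the words w_n b, w_n c, w_n d by a cyclic permutation of letters. -/

import Mathlib

inductive A : Type
  | a | b | c | d
deriving DecidableEq

def subst : A → List A
  | A.a => [A.a, A.c, A.a]
  | A.b => [A.d]
  | A.c => [A.b]
  | A.d => [A.c]

def substW (u : List A) : List A := u.flatMap subst

def wrd (n : ℕ) : List A := substW^[n - 1] [A.a]

def ltr (n : ℕ) : List A := substW^[n - 1] [A.c]

def seg (ξ : ℕ → A) (s m : ℕ) : List A := (List.range m).map fun i => ξ (s + 1 + i)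

def IsFixed (ξ : ℕ → A) : Prop :=
  ∀ N : ℕ, seg ξ 0 ((substW (seg ξ 0 N)).length) = substW (seg ξ 0 N)

lemma substW_append (u v : List A) : substW (u ++ v) = substW u ++ substW v :=
  List.flatMap_append

lemma wrd_iter (n : ℕ) (h : 1 ≤ n) : wrd (n + 1) = substW (wrd n) := by
  obtain ⟨k, rfl⟩ : ∃ k, n = k + 1 := ⟨n - 1, by omega⟩
  simp only [wrd, Nat.add_sub_cancel]
  rw [Function.iterate_succ_apply']

lemma ltr_iter (n : ℕ) (h : 1 ≤ n) : ltr (n + 1) = substW (ltr n) := by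
  obtain ⟨k, rfl⟩ : ∃ k, n = k + 1 := ⟨n - 1, by omega⟩
  simp only [ltr, Nat.add_sub_cancel]
  rw [Function.iterate_succ_apply']

lemma ltr_eq (n : ℕ) (h : 1 ≤ n) :
    ∃ x : A, (x = A.b ∨ x = A.c ∨ x = A.d) ∧ ltr n = [x] := by
  induction n with
  | zero => omega
  | succ m ih =>
    rcases Nat.eq_or_lt_of_le h with h1 | h1
    · exact ⟨A.c, Or.inr (Or.inl rfl), by rw [← h1]; rfl⟩
    · obtain ⟨x, hx, hl⟩ := ih (by omega)
      rw [ltr_iter m (by omega), hl]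
      rcases hx with rfl | rfl | rfl
      · exact ⟨A.d, Or.inr (Or.inr rfl), rfl⟩
      · exact ⟨A.b, Or.inl rfl, rfl⟩
      · exact ⟨A.c, Or.inr (Or.inl rfl), rfl⟩

lemma wrd_succ (n : ℕ) (h : 1 ≤ n) : wrd (n + 1) = wrd n ++ ltr n ++ wrd n := by
  induction n with
  | zero => omega
  | succ m ih =>
    rcases Nat.eq_or_lt_of_le h with h1 | h1
    · rw [← h1]; rfl
    · have hm : 1 ≤ m := by omega
      rw [wrd_iter (m+1) (by omega), ih hm, substW_append, substW_append,
        ← wrd_iter m hm, ← ltr_iter m hm, ← ih hm]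

lemma wrd_length (n : ℕ) (h : 1 ≤ n) : (wrd n).length = 2 ^ n - 1 := by
  induction n with
  | zero => omega
  | succ m ih =>
    rcases Nat.eq_or_lt_of_le h with h1 | h1
    · rw [← h1]; rfl
    · have hm : 1 ≤ m := by omega
      obtain ⟨x, _, hl⟩ := ltr_eq m hm
      rw [wrd_succ m hm, hl]
      simp only [List.length_append, List.length_singleton, ih hm]
      have := Nat.one_le_two_pow (n := m)
      have : 2 ^ (m+1) = 2 ^ m + 2 ^ m := by ring
      omega

lemma seg_prefix (ξ : ℕ → A) (hξ : IsFixed ξ) (n : ℕ) (h : 1 ≤ n) :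
    seg ξ 0 (2 ^ n - 1) = wrd n := by
  induction n with
  | zero => omega
  | succ m ih =>
    rcases Nat.eq_or_lt_of_le h with h1 | h1
    · have h0 : seg ξ 0 1 = [ξ 1] := by simp [seg, List.range_succ]
      have key := hξ 1
      rw [h0] at key
      rw [← h1]
      show seg ξ 0 1 = wrd 1
      rcases hv : ξ 1 with _ | _ | _ | _ <;> rw [hv] at key <;>
        simp only [substW, subst, List.flatMap_cons, List.flatMap_nil,
          List.append_nil, List.length_singleton] at key
      · rw [h0, hv]; rfl
      · rw [h0, hv] at key; exact absurd key (by simp)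
      · rw [h0, hv] at key; exact absurd key (by simp)
      · rw [h0, hv] at key; exact absurd key (by simp)
    · have hm : 1 ≤ m := by omega
      have key := hξ (2 ^ m - 1)
      rw [ih hm] at key
      rw [← wrd_iter m hm] at key
      rwa [wrd_length (m+1) (by omega)] at key

lemma block (n : ℕ) (hn : 1 ≤ n) : ∀ m, n ≤ m → ∀ j, j < 2 ^ m - 1 →
    (j % 2 ^ n < 2 ^ n - 1 → (wrd m).getD j A.a = (wrd n).getD (j % 2 ^ n) A.a) ∧
    (j % 2 ^ n = 2 ^ n - 1 →
      (wrd m).getD j A.a = A.b ∨ (wrd m).getD j A.a = A.c ∨ (wrd m).getD j A.a = A.d) := by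
  intro m
  induction m with
  | zero => intro hm; omega
  | succ M ih =>
    intro hm j hj
    have h2n : 1 ≤ 2 ^ n := Nat.one_le_two_pow
    rcases Nat.eq_or_lt_of_le hm with h1 | h1
    · -- m = n (as M + 1 = n)
      rw [← h1] at hj ⊢
      have hjm : j % 2 ^ n = j := Nat.mod_eq_of_lt (by omega)
      rw [hjm]
      exact ⟨fun _ => rfl, fun hc => by omega⟩
    · have hM : n ≤ M := by omega
      have hM1 : 1 ≤ M := by omega
      obtain ⟨x, hx, hl⟩ := ltr_eq M hM1
      have hw := wrd_succ M hM1
      have hlen : (wrd M).length = 2 ^ M - 1 := wrd_length M hM1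
      have h2M : 1 ≤ 2 ^ M := Nat.one_le_two_pow
      have hpow : 2 ^ (M + 1) = 2 ^ M + 2 ^ M := by ring
      rcases lt_trichotomy j (2 ^ M - 1) with hc | hc | hc
      · -- inside first copy
        have e1 : (wrd (M+1)).getD j A.a = (wrd M).getD j A.a := by
          rw [hw, List.append_assoc, List.getD_append _ _ _ _ (by omega)]
        rw [e1]
        exact ih hM j hc
      · -- middle letter position
        subst hc
        have hmod : (2 ^ M - 1) % 2 ^ n = 2 ^ n - 1 := by
          obtain ⟨k, hk⟩ := Nat.pow_dvd_pow 2 hM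
          have hthis : 2 ^ M - 1 = 2 ^ n * (k - 1) + (2 ^ n - 1) := by
            rw [hk]
            cases k with
            | zero => omega
            | succ k' => rw [Nat.mul_succ]; simp only [Nat.add_sub_cancel]; omega
          rw [hthis, Nat.mul_add_mod, Nat.mod_eq_of_lt (by omega)]
        rw [hmod]
        constructor
        · intro hcon; omega
        · intro _
          have e1 : (wrd (M+1)).getD (2 ^ M - 1) A.a = x := by
            rw [hw, List.append_assoc, List.getD_append_right _ _ _ _ (by omega),
              hlen, Nat.sub_self, hl]
            rfl
          rw [e1]; exact hx
      · -- inside second copy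
        have hj2 : j - 2 ^ M < 2 ^ M - 1 := by omega
        have e1 : (wrd (M+1)).getD j A.a = (wrd M).getD (j - 2 ^ M) A.a := by
          rw [hw, List.getD_append_right _ _ _ _ (by simp [hlen, hl]; omega)]
          congr 1
          simp [hlen, hl]
          omega
        have hmodeq : j % 2 ^ n = (j - 2 ^ M) % 2 ^ n := by
          obtain ⟨k, hk⟩ := Nat.pow_dvd_pow 2 hM
          have h3 : j = (j - 2 ^ M) + 2 ^ M := by omega
          conv_lhs => rw [h3]
          rw [hk, Nat.add_mul_mod_self_left]
        rw [e1, hmodeq]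
        exact ih hM (j - 2 ^ M) hj2

lemma xi_eq (ξ : ℕ → A) (hξ : IsFixed ξ) (m : ℕ) (hm : 1 ≤ m) (j : ℕ) (hj : j < 2 ^ m - 1) :
    ξ (1 + j) = (wrd m).getD j A.a := by
  have h := seg_prefix ξ hξ m hm
  have hlen : (wrd m).length = 2 ^ m - 1 := wrd_length m hm
  have h2 := congrArg (fun l => l.getD j A.a) h
  simp only [seg] at h2
  rw [List.getD_eq_getElem _ _ (by simp; omega)] at h2
  simp only [List.getElem_map, List.getElem_range, Nat.zero_add] at h2
  exact h2

lemma big_m (n j : ℕ) : ∃ m, n ≤ m ∧ 1 ≤ m ∧ j < 2 ^ m - 1 := by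
  refine ⟨n + j + 2, by omega, by omega, ?_⟩
  have := Nat.lt_two_pow_self (n := n + j + 2)
  omega

theorem stmt8 (ξ : ℕ → A) (hξ : IsFixed ξ) :
    ∀ n : ℕ, 1 ≤ n → ∀ u : List A, u.length = 2 ^ n → (∃ s : ℕ, seg ξ s (2 ^ n) = u) →
      ∃ lt : A, (lt = A.b ∨ lt = A.c ∨ lt = A.d) ∧
        ∃ u₁ u₂ : List A, wrd n ++ [lt] = u₁ ++ u₂ ∧ u = u₂ ++ u₁ := by
  intro n hn u hu ⟨s, hs⟩
  set L := 2 ^ n with hLdef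
  have hL2 : 2 ≤ L := by
    calc 2 = 2 ^ 1 := rfl
    _ ≤ 2 ^ n := Nat.pow_le_pow_right (by norm_num) hn
  have hlenw : (wrd n).length = L - 1 := wrd_length n hn
  set r := s % L with hrdef
  have hr : r < L := Nat.mod_lt _ (by omega)
  set t := L - 1 - r with htdef
  have ht : t < L := by omega
  have hst : (s + t) % L = L - 1 := by
    obtain ⟨q, hq⟩ : ∃ q, s = L * q + r := ⟨s / L, by rw [hrdef]; exact (Nat.div_add_mod s L).symm⟩
    have : s + t = L * q + (L - 1) := by omega
    rw [this, Nat.mul_add_mod, Nat.mod_eq_of_lt (by omega)]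
  set lt := ξ (1 + (s + t)) with hltdef
  -- lt is one of b, c, d
  obtain ⟨m, hm1, hm2, hm3⟩ := big_m n (s + t)
  have hlt : lt = A.b ∨ lt = A.c ∨ lt = A.d := by
    rw [hltdef, xi_eq ξ hξ m hm2 (s + t) hm3]
    exact ((block n hn m hm1 (s + t) hm3).2) hst
  set P := wrd n ++ [lt] with hPdef
  have hP : P.length = L := by simp [hPdef, hlenw]; omega
  refine ⟨lt, hlt, P.take r, P.drop r, (List.take_append_drop r P).symm, ?_⟩
  -- key pointwise identity for ξ
  have key : ∀ i, i < L → ξ (s + 1 + i) = P.getD ((r + i) % L) A.a := by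
    intro i hi
    have hmod : (s + i) % L = (r + i) % L := by
      conv_lhs => rw [Nat.add_mod]
      conv_rhs => rw [Nat.add_mod]
      rw [hrdef, Nat.mod_mod_of_dvd s dvd_rfl]
    have hsi : s + 1 + i = 1 + (s + i) := by omega
    rcases Nat.lt_or_ge ((s + i) % L) (L - 1) with hcase | hcase
    · obtain ⟨m', hm1', hm2', hm3'⟩ := big_m n (s + i)
      rw [hsi, xi_eq ξ hξ m' hm2' (s + i) hm3',
        ((block n hn m' hm1' (s + i) hm3').1) hcase, ← hmod,
        hPdef, List.getD_append _ _ _ _ (by omega)]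
    · have hcase' : (s + i) % L = L - 1 := by
        have := Nat.mod_lt (s + i) (show 0 < L by omega)
        omega
      have hit : i = t := by
        have hme : (s + i) % L = (s + t) % L := by rw [hcase', hst]
        have h2 : i % L = t % L := Nat.ModEq.add_left_cancel' s hme
        rwa [Nat.mod_eq_of_lt hi, Nat.mod_eq_of_lt ht] at h2
      subst hit
      have hrt : (r + t) % L = L - 1 := by
        rw [show r + t = L - 1 by omega, Nat.mod_eq_of_lt (by omega)]
      rw [hrt, hsi, ← hltdef, hPdef,
        List.getD_append_right _ _ _ _ (by omega), hlenw, Nat.sub_self]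
      rfl
  -- rotation identity for P
  have key2 : ∀ i, i < L → (P.drop r ++ P.take r).getD i A.a = P.getD ((r + i) % L) A.a := by
    intro i hi
    have hdl : (P.drop r).length = L - r := by rw [List.length_drop, hP]
    rcases Nat.lt_or_ge i (L - r) with hc | hc
    · rw [List.getD_append _ _ _ _ (by omega),
        List.getD_eq_getElem _ _ (by omega), List.getElem_drop,
        ← List.getD_eq_getElem _ _ (by omega),
        Nat.mod_eq_of_lt (by omega)]
    · rw [List.getD_append_right _ _ _ _ (by omega), hdl,
        List.getD_eq_getElem _ _ (by rw [List.length_take, hP]; omega),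
        List.getElem_take, ← List.getD_eq_getElem _ _ (by omega)]
      congr 1
      rw [Nat.mod_eq_sub_mod (by omega), Nat.mod_eq_of_lt (by omega)]
      omega
  -- conclude
  rw [← hs]
  apply List.ext_getElem
  · simp [seg, hP]; omega
  · intro i h1 h2
    have hi : i < L := by simpa [seg] using h1
    have e1 : (seg ξ s L)[i] = ξ (s + 1 + i) := by
      simp [seg]
    have e2 : (P.drop r ++ P.take r)[i] = (P.drop r ++ P.take r).getD i A.a :=
      (List.getD_eq_getElem _ _ h2).symm
    rw [e1, e2, key2 i hi, ← key i hi]
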